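/- Let G be a finite group and u a unit of the Burnside ring A(G). If |G| is odd, then (u + 1)/2 is an element of A(G) (i.e., u + 1 is divisible by 2 in A(G)), and it is an idempotent; this gives a bijection between unit elements and idempotent elements of A(G) via e ↦ 2e − 1. -/

import Mathlib

open MulAction

/-- The vector of marks of a `G`-set `X`: its `H`-component is the number of `H`-fixed
points `|X^H|`. -/
noncomputable def markVector (G : Type) [Group G] (X : Type) [MulAction G X] :
    Subgroup G → ℤ :=
  fun H => Nat.card (fixedPoints H X)

/-- The set of mark vectors of finite `G`-sets. -/
def GSetMarks (G : Type) [Group G] : Set (Subgroup G → ℤ) :=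
  {f | ∃ (X : Type) (_ : Finite X) (_ : MulAction G X), f = markVector G X}

/-- The Burnside ring `A(G)`, realized (via the injective mark homomorphism) as the
subring of `∏_{H ≤ G} ℤ` generated by the mark vectors of finite `G`-sets. -/
def BurnsideRing (G : Type) [Group G] : Subring (Subgroup G → ℤ) :=
  Subring.closure (GSetMarks G)

theorem mem_gsetMarks (G : Type) [Group G] (X : Type) [hF : Finite X] [hM : MulAction G X] :
    markVector G X ∈ GSetMarks G := ⟨X, hF, hM, rfl⟩

/-- The class `[X] ∈ A(G)` of a finite `G`-set `X`. -/
noncomputable def burnsideMk (G : Type) [Group G] (X : Type) [Finite X] [MulAction G X] :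
    BurnsideRing G :=
  ⟨markVector G X, Subring.subset_closure (mem_gsetMarks G X)⟩

/-- The mark (fixed-point) ring homomorphism `φ_H : A(G) → ℤ`. -/
noncomputable def mark (G : Type) [Group G] (H : Subgroup G) : BurnsideRing G →+* ℤ :=
  (Pi.evalRingHom (fun _ => ℤ) H).comp (BurnsideRing G).subtype


section Aux

variable {G : Type} [Group G] {X : Type} [MulAction G X]

/-- The action of `G` on `Sym2 X`. -/
instance sym2MulAction : MulAction G (Sym2 X) where
  smul g s := s.map (g • ·)
  one_smul s := s.ind fun a b => by
    show Sym2.map _ _ = _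
    rw [Sym2.map_pair_eq, one_smul, one_smul]
  mul_smul g h s := s.ind fun a b => by
    show Sym2.map _ _ = Sym2.map _ (Sym2.map _ _)
    rw [Sym2.map_pair_eq, Sym2.map_pair_eq, Sym2.map_pair_eq, mul_smul, mul_smul]

lemma sym2_smul_mk (g : G) (a b : X) : g • s(a, b) = s(g • a, g • b) :=
  Sym2.map_pair_eq _ _ _

instance sym2Finite [Finite X] : Finite (Sym2 X) :=
  Finite.of_surjective (Quot.mk _) Quot.mk_surjective

/-- In an odd-order group, a fixed unordered pair consists of fixed points. -/
lemma fix_of_fix_pair {H : Type} [Group H] [Finite H] (hodd : Odd (Nat.card H))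
    [MulAction H X] (a b : X) (hfix : ∀ h : H, h • s(a, b) = s(a, b)) (h : H) :
    h • a = a ∧ h • b = b := by
  have key : ∀ h : H, h • a = b → h • b = a → a = b := by
    intro h hab hba
    have h2 : ∀ m : ℕ, h ^ (2 * m) • a = a := by
      intro m
      induction m with
      | zero => simp
      | succ m ih =>
        have h2a : h ^ 2 • a = a := by rw [pow_two, mul_smul, hab, hba]
        have : 2 * (m + 1) = 2 * m + 2 := by ring
        rw [this, pow_add, mul_smul, h2a, ih]
    obtain ⟨m, hm⟩ := hodd
    have hcard : h ^ Nat.card H = 1 := pow_card_eq_one'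
    have : h ^ Nat.card H • a = b := by
      rw [hm, pow_succ', mul_smul, h2, hab]
    rw [hcard, one_smul] at this
    exact this
  have := hfix h
  rw [sym2_smul_mk, Sym2.eq_iff] at this
  rcases this with ⟨h1, h2⟩ | ⟨h1, h2⟩
  · exact ⟨h1, h2⟩
  · have hab := key h h1 h2
    exact ⟨by rw [h1, hab], by rw [h2, hab]⟩

lemma card_fixed_sym2 [Finite G] [Finite X] (hodd : Odd (Nat.card G)) (H : Subgroup G) :
    Nat.card (fixedPoints H (Sym2 X)) * 2 =
      Nat.card (fixedPoints H X) ^ 2 + Nat.card (fixedPoints H X) := by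
  have hoddH : Odd (Nat.card H) := by
    rcases Nat.even_or_odd (Nat.card H) with he | ho
    · exfalso
      have : (2 : ℕ) ∣ Nat.card G :=
        dvd_trans he.two_dvd (Subgroup.card_subgroup_dvd_card H)
      rcases hodd with ⟨m, hm⟩
      omega
    · exact ho
  -- equivalence Sym2 (fixedPoints H X) ≃ fixedPoints H (Sym2 X)
  have e : Sym2 (fixedPoints H X) ≃ fixedPoints H (Sym2 X) := by
    refine Equiv.ofBijective
      (fun s => ⟨s.map Subtype.val, ?_⟩) ⟨?_, ?_⟩
    · intro h
      induction s using Sym2.ind with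
      | _ a b =>
        show h • Sym2.map _ _ = _
        rw [Sym2.map_pair_eq, sym2_smul_mk, a.2 h, b.2 h]
    · intro s t hst
      have := Sym2.map.injective (Subtype.val_injective) (congrArg Subtype.val hst)
      exact this
    · rintro ⟨s, hs⟩
      induction s using Sym2.ind with
      | _ a b =>
        have hfix : ∀ h : H, h • s(a, b) = s(a, b) := fun h => hs h
        have key := fix_of_fix_pair hoddH a b hfix
        refine ⟨s(⟨a, fun h => (key h).1⟩, ⟨b, fun h => (key h).2⟩), ?_⟩
        simp [Sym2.map_pair_eq]
  rw [← Nat.card_congr e]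
  haveI : Fintype (fixedPoints H X) := Fintype.ofFinite _
  haveI := Classical.decEq (fixedPoints H X)
  rw [Nat.card_eq_fintype_card, Sym2.card, Nat.card_eq_fintype_card]
  set n := Fintype.card (fixedPoints H X)
  rw [Nat.choose_two_right]
  have heven : 2 ∣ (n + 1) * n := by
    rw [mul_comm]; exact (Nat.even_mul_succ_self n).two_dvd
  have h1 : n + 1 - 1 = n := rfl
  rw [h1, Nat.div_mul_cancel heven]
  ring

end Aux

section Main

variable {G : Type} [Group G] [Finite G]

lemma markVector_sq (hodd : Odd (Nat.card G)) (X : Type) [Finite X] [MulAction G X] :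
    markVector G X * markVector G X - markVector G X =
      2 * ((burnsideMk G (Sym2 X) - burnsideMk G X : BurnsideRing G) : Subgroup G → ℤ) := by
  funext H
  have h := card_fixed_sym2 (X := X) hodd H
  have h' : (Nat.card (fixedPoints H (Sym2 X)) : ℤ) * 2 =
      (Nat.card (fixedPoints H X) : ℤ) ^ 2 + (Nat.card (fixedPoints H X) : ℤ) := by
    exact_mod_cast h
  show markVector G X H * markVector G X H - markVector G X H =
    2 * (markVector G (Sym2 X) H - markVector G X H)
  unfold markVector
  rw [sq] at h'
  linarith

lemma exists_half_sq_sub (hodd : Odd (Nat.card G)) :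
    ∀ x : BurnsideRing G, ∃ y : BurnsideRing G, x * x - x = 2 * y := by
  rintro ⟨x, hx⟩
  have main : ∀ (x : Subgroup G → ℤ) (hx : x ∈ BurnsideRing G),
      ∃ y : BurnsideRing G, x * x - x = 2 * (y : Subgroup G → ℤ) := by
    intro x hx
    induction hx using Subring.closure_induction with
    | mem x hmem =>
      obtain ⟨X, hF, hM, rfl⟩ := hmem
      exact ⟨burnsideMk G (Sym2 X) - burnsideMk G X, markVector_sq hodd X⟩
    | zero => exact ⟨0, by simp⟩
    | one => exact ⟨0, by simp⟩
    | add x y hx hy ihx ihy =>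
      obtain ⟨a, ha⟩ := ihx
      obtain ⟨b, hb⟩ := ihy
      refine ⟨a + b + ⟨x, hx⟩ * ⟨y, hy⟩, ?_⟩
      have hc : ((a + b + ⟨x, hx⟩ * ⟨y, hy⟩ : BurnsideRing G) : Subgroup G → ℤ)
          = (a : Subgroup G → ℤ) + b + x * y := rfl
      rw [hc]
      linear_combination ha + hb
    | neg x hx ihx =>
      obtain ⟨a, ha⟩ := ihx
      refine ⟨a + ⟨x, hx⟩, ?_⟩
      have hc : ((a + ⟨x, hx⟩ : BurnsideRing G) : Subgroup G → ℤ)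
          = (a : Subgroup G → ℤ) + x := rfl
      rw [hc]
      linear_combination ha
    | mul x y hx hy ihx ihy =>
      obtain ⟨a, ha⟩ := ihx
      obtain ⟨b, hb⟩ := ihy
      refine ⟨a * ⟨y, hy⟩ * ⟨y, hy⟩ + ⟨x, hx⟩ * b, ?_⟩
      have hc : ((a * ⟨y, hy⟩ * ⟨y, hy⟩ + ⟨x, hx⟩ * b : BurnsideRing G) : Subgroup G → ℤ)
          = (a : Subgroup G → ℤ) * y * y + x * b := rfl
      rw [hc]
      linear_combination ha * (y * y) + x * hb
  obtain ⟨y, hy⟩ := main x hx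
  exact ⟨y, Subtype.ext hy⟩

lemma two_cancel (a b : BurnsideRing G) (h : 2 * a = 2 * b) : a = b := by
  apply Subtype.ext; funext H
  have := congrFun (congrArg Subtype.val h) H
  have h2 : 2 * (a : Subgroup G → ℤ) H = 2 * (b : Subgroup G → ℤ) H := this
  linarith

lemma unit_sq (u : BurnsideRing G) (hu : IsUnit u) : u * u = 1 := by
  apply Subtype.ext; funext H
  have : IsUnit (mark G H u) := hu.map (mark G H)
  rw [Int.isUnit_iff] at this
  show (u : Subgroup G → ℤ) H * (u : Subgroup G → ℤ) H = 1
  have hm : mark G H u = (u : Subgroup G → ℤ) H := rfl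
  rw [hm] at this
  rcases this with h | h <;> rw [h] <;> norm_num

end Main

theorem burnside_units_idempotents' (G : Type) [Group G] [Finite G]
    (hodd : Odd (Nat.card G)) :
    (∀ u : BurnsideRing G, IsUnit u →
        ∃ e : BurnsideRing G, u + 1 = 2 * e ∧ IsIdempotentElem e) ∧
      (∀ e : BurnsideRing G, IsIdempotentElem e → IsUnit (2 * e - 1)) ∧
      (∀ u : BurnsideRing G, IsUnit u →
        ∃! e : BurnsideRing G, IsIdempotentElem e ∧ 2 * e - 1 = u) := by
  have part1 : ∀ u : BurnsideRing G, IsUnit u →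
      ∃ e : BurnsideRing G, u + 1 = 2 * e ∧ IsIdempotentElem e := by
    intro u hu
    obtain ⟨a, ha⟩ := exists_half_sq_sub hodd u
    have hu2 : u * u = 1 := unit_sq u hu
    refine ⟨1 - a, by linear_combination hu2 - ha, ?_⟩
    have heq : u + 1 = 2 * (1 - a) := by linear_combination hu2 - ha
    have h4 : (u + 1) * (u + 1) = 2 * (u + 1) := by linear_combination hu2
    rw [heq] at h4
    apply two_cancel; apply two_cancel
    show 2 * (2 * ((1 - a) * (1 - a))) = 2 * (2 * (1 - a))
    linear_combination h4
  refine ⟨part1, ?_, ?_⟩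
  · intro e he
    exact IsUnit.of_mul_eq_one (a := 2 * e - 1) (2 * e - 1) (by linear_combination 4 * he.eq)
  · intro u hu
    obtain ⟨e, heq, hid⟩ := part1 u hu
    refine ⟨e, ⟨hid, by linear_combination -heq⟩, ?_⟩
    rintro e' ⟨_, he'⟩
    apply two_cancel
    linear_combination he' - (by linear_combination -heq : 2 * e - 1 = u)


/-- Let `G` be a finite group of odd order.  Then for every unit `u` of the
Burnside ring `A(G)`, the element `(u+1)/2` exists in `A(G)` (i.e. `u + 1` is divisible by
`2`) and is idempotent; moreover `e ↦ 2e − 1` is a bijection from idempotent elements to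
unit elements of `A(G)`. -/
theorem burnside_units_idempotents (G : Type) [Group G] [Finite G]
    (hodd : Odd (Nat.card G)) :
    (∀ u : BurnsideRing G, IsUnit u →
        ∃ e : BurnsideRing G, u + 1 = 2 * e ∧ IsIdempotentElem e) ∧
      (∀ e : BurnsideRing G, IsIdempotentElem e → IsUnit (2 * e - 1)) ∧
      (∀ u : BurnsideRing G, IsUnit u →
        ∃! e : BurnsideRing G, IsIdempotentElem e ∧ 2 * e - 1 = u) :=
  burnside_units_idempotents' G hodd
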